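/- arXiv:1206.2406 — 3 statements merged into one kernel-verified Lean document; each statement's English description precedes it below -/
import Mathlib

section
/- The map f defined on [0,1] by f(x) = 1 - sqrt(1 - 2x) for x < 1/2 and f(x) = sqrt(2x - 1) for x ≥ 1/2 preserves Lebesgue measure on [0,1]. -/
open MeasureTheory

noncomputable def bakerFactor : ℝ → ℝ := fun x =>
  if x < 1/2 then 1 - Real.sqrt (1 - 2*x) else Real.sqrt (2*x - 1)

lemma bakerFactor_measurable : Measurable bakerFactor := by
  unfold bakerFactor
  apply Measurable.ite (measurableSet_lt measurable_id measurable_const) <;> fun_prop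

lemma bakerFactor_nonneg {x : ℝ} (hx : 0 ≤ x) : 0 ≤ bakerFactor x := by
  unfold bakerFactor
  split_ifs with h
  · have : Real.sqrt (1 - 2*x) ≤ 1 := Real.sqrt_le_one.mpr (by linarith)
    linarith
  · exact Real.sqrt_nonneg _

lemma bakerFactor_le_one {x : ℝ} (hx : x ≤ 1) : bakerFactor x ≤ 1 := by
  unfold bakerFactor
  split_ifs with h
  · have := Real.sqrt_nonneg (1 - 2*x); linarith
  · exact Real.sqrt_le_one.mpr (by linarith)

theorem stmt_1 :
    MeasurePreserving bakerFactor
      (volume.restrict (Set.Icc (0:ℝ) 1))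
      (volume.restrict (Set.Icc (0:ℝ) 1)) := by
  refine ⟨bakerFactor_measurable, ?_⟩
  refine Measure.ext_of_Iic _ _ (fun t => ?_)
  rw [Measure.map_apply bakerFactor_measurable measurableSet_Iic,
      Measure.restrict_apply (bakerFactor_measurable measurableSet_Iic),
      Measure.restrict_apply measurableSet_Iic]
  rcases lt_or_ge t 0 with ht | ht
  · have h1 : bakerFactor ⁻¹' Set.Iic t ∩ Set.Icc 0 1 = ∅ := by
      ext x
      simp only [Set.mem_inter_iff, Set.mem_preimage, Set.mem_Iic, Set.mem_Icc,
        Set.mem_empty_iff_false, iff_false]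
      rintro ⟨hf, hx0, hx1⟩
      have := bakerFactor_nonneg hx0
      linarith
    have h2 : Set.Iic t ∩ Set.Icc (0:ℝ) 1 = ∅ := by
      ext x
      simp only [Set.mem_inter_iff, Set.mem_Iic, Set.mem_Icc,
        Set.mem_empty_iff_false, iff_false]
      rintro ⟨hf, hx0, hx1⟩; linarith
    rw [h1, h2]
  rcases le_or_gt 1 t with ht1 | ht1
  · have h1 : bakerFactor ⁻¹' Set.Iic t ∩ Set.Icc 0 1 = Set.Icc 0 1 := by
      ext x
      simp only [Set.mem_inter_iff, Set.mem_preimage, Set.mem_Iic, Set.mem_Icc]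
      constructor
      · rintro ⟨_, h⟩; exact h
      · rintro ⟨hx0, hx1⟩
        exact ⟨le_trans (bakerFactor_le_one hx1) ht1, hx0, hx1⟩
    have h2 : Set.Iic t ∩ Set.Icc (0:ℝ) 1 = Set.Icc 0 1 := by
      ext x
      simp only [Set.mem_inter_iff, Set.mem_Iic, Set.mem_Icc]
      constructor
      · rintro ⟨_, h⟩; exact h
      · rintro ⟨hx0, hx1⟩; exact ⟨by linarith, hx0, hx1⟩
    rw [h1, h2]
  · -- 0 ≤ t < 1
    set a : ℝ := (1 - (1-t)^2)/2 with ha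
    set b : ℝ := (t^2 + 1)/2 with hb
    have ha2 : a < 1/2 := by nlinarith
    have ha0 : 0 ≤ a := by nlinarith
    have hb1 : b ≤ 1 := by nlinarith
    have hb2 : 1/2 ≤ b := by nlinarith
    have h1 : bakerFactor ⁻¹' Set.Iic t ∩ Set.Icc 0 1
        = Set.Icc 0 a ∪ Set.Icc (1/2) b := by
      ext x
      simp only [Set.mem_inter_iff, Set.mem_preimage, Set.mem_Iic, Set.mem_Icc,
        Set.mem_union]
      constructor
      · rintro ⟨hf, hx0, hx1⟩
        unfold bakerFactor at hf
        split_ifs at hf with h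
        · left
          refine ⟨hx0, ?_⟩
          have hs : Real.sqrt (1 - 2*x) ^ 2 = 1 - 2*x :=
            Real.sq_sqrt (by linarith)
          have hs2 : 1 - t ≤ Real.sqrt (1 - 2*x) := by linarith
          nlinarith [Real.sqrt_nonneg (1 - 2*x)]
        · right
          push_neg at h
          refine ⟨h, ?_⟩
          have hs : Real.sqrt (2*x - 1) ^ 2 = 2*x - 1 :=
            Real.sq_sqrt (by linarith)
          nlinarith [Real.sqrt_nonneg (2*x - 1)]
      · rintro (⟨hx0, hxa⟩ | ⟨hx0, hxb⟩)
        · refine ⟨?_, hx0, by linarith⟩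
          unfold bakerFactor
          rw [if_pos (by linarith)]
          have : 1 - t ≤ Real.sqrt (1 - 2*x) := by
            rw [show (1 - t : ℝ) = Real.sqrt ((1-t)^2) by
              rw [Real.sqrt_sq (by linarith)]]
            exact Real.sqrt_le_sqrt (by nlinarith)
          linarith
        · refine ⟨?_, by linarith, by linarith⟩
          unfold bakerFactor
          rw [if_neg (by push_neg; linarith)]
          calc Real.sqrt (2*x - 1) ≤ Real.sqrt (t^2) :=
                Real.sqrt_le_sqrt (by nlinarith)
            _ = t := Real.sqrt_sq ht
    have h2 : Set.Iic t ∩ Set.Icc (0:ℝ) 1 = Set.Icc 0 t := by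
      ext x
      simp only [Set.mem_inter_iff, Set.mem_Iic, Set.mem_Icc]
      constructor
      · rintro ⟨h, hx0, _⟩; exact ⟨hx0, h⟩
      · rintro ⟨hx0, hxt⟩; exact ⟨hxt, hx0, by linarith⟩
    rw [h1, h2]
    have hdisj : Disjoint (Set.Icc (0:ℝ) a) (Set.Icc (1/2) b) := by
      rw [Set.disjoint_left]
      rintro x ⟨hx0, hxa⟩ ⟨hx1, hxb⟩
      linarith
    rw [measure_union hdisj measurableSet_Icc, Real.volume_Icc, Real.volume_Icc,
      Real.volume_Icc, ← ENNReal.ofReal_add (by linarith) (by linarith)]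
    congr 1
    simp only [ha, hb]
    ring
end

section
/- Let (xₙ) be a decreasing sequence of positive reals with x₀ ≤ δ₀, satisfying C₀⁻¹ xₙ^{1+α} ≤ xₙ - x_{n+1} ≤ C₀ xₙ^{1+α} for all n and some constants C₀ ≥ 1, α > 0, δ₀ > 0. Then there exist constants c, C > 0 such that c·n^{-1/α} ≤ xₙ ≤ C·n^{-1/α} for all n ≥ 1. -/
open Real

/-- Bernoulli for nonpositive exponent: `(1+s)^(-α) ≥ 1 - α s` for `s > -1`, `α > 0`. -/
lemma bern_neg {α s : ℝ} (hα : 0 < α) (hs : -1 < s) : 1 - α * s ≤ (1 + s) ^ (-α) := by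
  have h1s : 0 < 1 + s := by linarith
  rcases le_or_gt 1 α with hα1 | hα1
  · -- α ≥ 1: use Bernoulli with t = -s/(1+s)
    set t := -s / (1 + s) with ht
    have ht1 : -1 ≤ t := by
      rw [ht, le_div_iff₀ h1s]; nlinarith
    have hb := one_add_mul_self_le_rpow_one_add ht1 hα1
    have h1t : 1 + t = (1 + s)⁻¹ := by rw [ht]; field_simp; ring
    rw [h1t, Real.inv_rpow h1s.le, ← Real.rpow_neg h1s.le] at hb
    refine le_trans ?_ hb
    have hts : t + s = s ^ 2 / (1 + s) := by rw [ht]; field_simp; ring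
    have h2 : 0 ≤ α * (t + s) := by rw [hts]; positivity
    nlinarith
  · -- α ≤ 1: reverse Bernoulli plus reciprocal
    rcases le_or_gt (1 - α * s) 0 with h0 | h0
    · exact le_trans h0 (Real.rpow_nonneg h1s.le _)
    have hb := rpow_one_add_le_one_add_mul_self hs.le hα.le hα1.le
    have hpow : 0 < (1 + s) ^ α := rpow_pos_of_pos h1s α
    have key : (1 - α * s) * (1 + s) ^ α ≤ 1 := by nlinarith [mul_le_mul_of_nonneg_left hb h0.le, sq_nonneg (α * s)]
    have := (le_div_iff₀ hpow).mpr key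
    rwa [one_div, ← Real.rpow_neg h1s.le] at this

/-- Convexity-type inequality for `x ↦ x^(-α)`. -/
lemma conv_rpow_neg {α a b : ℝ} (hα : 0 < α) (ha : 0 < a) (hb : 0 < b) :
    a ^ (-α) + α * ((a - b) / a) * a ^ (-α) ≤ b ^ (-α) := by
  have hs : -1 < b / a - 1 := by have : 0 < b / a := div_pos hb ha; linarith
  have h := bern_neg hα hs
  have h1 : (1:ℝ) + (b / a - 1) = b / a := by ring
  rw [h1, Real.div_rpow hb.le ha.le] at h
  have hap : 0 < a ^ (-α) := rpow_pos_of_pos ha _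
  have h2 := mul_le_mul_of_nonneg_right h hap.le
  rw [div_mul_cancel₀ _ (ne_of_gt hap)] at h2
  calc a ^ (-α) + α * ((a - b) / a) * a ^ (-α)
      = (1 - α * (b / a - 1)) * a ^ (-α) := by field_simp; ring
    _ ≤ b ^ (-α) := h2

theorem stmt_7 (α C₀ δ₀ : ℝ) (hα : 0 < α) (hC₀ : 1 ≤ C₀) (hδ₀ : 0 < δ₀)
    (x : ℕ → ℝ) (hpos : ∀ n, 0 < x n) (hdec : StrictAnti x)
    (hx0 : x 0 ≤ δ₀)
    (hgap : ∀ n, C₀⁻¹ * (x n)^(1+α) ≤ x n - x (n+1) ∧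
                 x n - x (n+1) ≤ C₀ * (x n)^(1+α)) :
    ∃ c > (0:ℝ), ∃ C > (0:ℝ), ∀ n : ℕ, 1 ≤ n →
      c * (n:ℝ)^(-(1/α)) ≤ x n ∧ x n ≤ C * (n:ℝ)^(-(1/α)) := by
  have hC₀pos : (0:ℝ) < C₀ := lt_of_lt_of_le one_pos hC₀
  have hypos : ∀ n, (0:ℝ) < (x n) ^ (-α) := fun n => rpow_pos_of_pos (hpos n) _
  have hyx : ∀ n, (x n) ^ (-α) * (x n) ^ α = 1 := fun n => by
    rw [← Real.rpow_add (hpos n), neg_add_cancel, Real.rpow_zero]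
  have hxsplit : ∀ n, (x n) ^ (1+α) = x n * (x n) ^ α := fun n => by
    rw [Real.rpow_add (hpos n), Real.rpow_one]
  have hxapos : ∀ n, (0:ℝ) < (x n) ^ α := fun n => rpow_pos_of_pos (hpos n) _
  set K := α * C₀⁻¹ with hK
  have hKpos : 0 < K := by positivity
  -- lower step for y = x^(-α)
  have hstepL : ∀ n, (x n) ^ (-α) + K ≤ (x (n+1)) ^ (-α) := by
    intro n
    have hc := conv_rpow_neg hα (hpos n) (hpos (n+1))
    have hdiv : C₀⁻¹ * (x n) ^ α ≤ (x n - x (n+1)) / x n := by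
      rw [le_div_iff₀ (hpos n)]
      calc C₀⁻¹ * (x n) ^ α * x n = C₀⁻¹ * (x n) ^ (1+α) := by rw [hxsplit n]; ring
        _ ≤ x n - x (n+1) := (hgap n).1
    have h1 : K ≤ α * ((x n - x (n+1)) / x n) * (x n) ^ (-α) := by
      have hone : C₀⁻¹ * (x n) ^ α * (x n) ^ (-α) = C₀⁻¹ := by
        rw [mul_assoc, mul_comm ((x n)^α), hyx n, mul_one]
      calc K = α * (C₀⁻¹ * (x n) ^ α) * (x n) ^ (-α) := by
              rw [mul_assoc (α), hone]
        _ ≤ α * ((x n - x (n+1)) / x n) * (x n) ^ (-α) := by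
              apply mul_le_mul_of_nonneg_right _ (hypos n).le
              exact mul_le_mul_of_nonneg_left hdiv hα.le
    linarith
  have hlin : ∀ n : ℕ, (x 0) ^ (-α) + n * K ≤ (x n) ^ (-α) := by
    intro n
    induction n with
    | zero => simp
    | succ m ih =>
        have := hstepL m
        push_cast
        push_cast at ih
        linarith
  have hylow : ∀ n : ℕ, (n:ℝ) * K ≤ (x n) ^ (-α) := fun n => by
    have := hlin n; have := hypos 0; linarith
  -- identity to invert
  have hxid : ∀ n, ((x n) ^ (-α)) ^ (-(1/α)) = x n := by
    intro n
    rw [← Real.rpow_mul (hpos n).le]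
    have : (-α) * (-(1/α)) = 1 := by field_simp
    rw [this, Real.rpow_one]
  have hneg : -(1/α) ≤ 0 := by
    have : (0:ℝ) < 1/α := by positivity
    linarith
  -- upper bound on x n for n ≥ 1
  have hupper : ∀ n : ℕ, 1 ≤ n → x n ≤ K ^ (-(1/α)) * (n:ℝ) ^ (-(1/α)) := by
    intro n hn
    have hn' : (0:ℝ) < (n:ℝ) := by exact_mod_cast hn
    have h1 : 0 < K * n := by positivity
    have h2 : K * n ≤ (x n) ^ (-α) := by have := hylow n; linarith [mul_comm K (n:ℝ)]
    have h3 := Real.rpow_le_rpow_of_nonpos h1 h2 hneg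
    rw [hxid n, Real.mul_rpow hKpos.le hn'.le] at h3
    exact h3
  -- choose N with x N small
  set N := ⌈2 * C₀ / K⌉₊ + 1 with hNdef
  have hN1 : 1 ≤ N := Nat.le_add_left 1 _
  have hKN : 2 * C₀ ≤ K * N := by
    have h := Nat.le_ceil (2 * C₀ / K)
    have h2 : 2 * C₀ / K ≤ (N:ℝ) := by
      rw [hNdef]; push_cast; linarith
    rw [div_le_iff₀ hKpos] at h2
    linarith [mul_comm K ((N:ℕ):ℝ), h2]
  have hyN : 2 * C₀ ≤ (x N) ^ (-α) := by
    have h1 := hylow N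
    have hcomm : K * ((N:ℕ):ℝ) = ((N:ℕ):ℝ) * K := mul_comm _ _
    linarith
  have hxNsmall : (x N) ^ α ≤ (2 * C₀)⁻¹ := by
    have hyinvN : (x N) ^ (-α) = ((x N) ^ α)⁻¹ := Real.rpow_neg (hpos N).le α
    rw [hyinvN] at hyN
    have h2C : (0:ℝ) < 2 * C₀ := by positivity
    calc (x N) ^ α = (((x N) ^ α)⁻¹)⁻¹ := (inv_inv _).symm
      _ ≤ (2 * C₀)⁻¹ := inv_anti₀ h2C hyN
  have hsmall : ∀ n, N ≤ n → (x n) ^ α ≤ (2 * C₀)⁻¹ := fun n hn =>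
    le_trans (Real.rpow_le_rpow (hpos n).le (hdec.antitone hn) hα.le) hxNsmall
  have hratio : ∀ n, N ≤ n → x n ≤ 2 * x (n+1) := by
    intro n hn
    have hg := (hgap n).2
    rw [hxsplit n] at hg
    have h5 : C₀ * (x n) ^ α ≤ 2⁻¹ := by
      calc C₀ * (x n) ^ α ≤ C₀ * (2 * C₀)⁻¹ :=
            mul_le_mul_of_nonneg_left (hsmall n hn) hC₀pos.le
        _ = 2⁻¹ := by field_simp
    nlinarith [hpos n, hpos (n+1), hg, mul_le_mul_of_nonneg_left h5 (hpos n).le]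
  -- upper step
  have h2pow : (0:ℝ) < (2:ℝ) ^ (1+α) := rpow_pos_of_pos two_pos _
  set b := α * C₀ * (2:ℝ) ^ (1+α) with hbdef
  have hbpos : 0 < b := mul_pos (mul_pos hα hC₀pos) h2pow
  have hstepU : ∀ n, N ≤ n → (x (n+1)) ^ (-α) ≤ (x n) ^ (-α) + b := by
    intro n hn
    have hc := conv_rpow_neg hα (hpos (n+1)) (hpos n)
    have hr : x n / x (n+1) ≤ 2 := by
      rw [div_le_iff₀ (hpos (n+1))]
      linarith [hratio n hn]
    have hrp : (x n / x (n+1)) ^ (1+α) ≤ (2:ℝ) ^ (1+α) :=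
      Real.rpow_le_rpow (div_pos (hpos n) (hpos (n+1))).le hr (by linarith)
    have hT : α * ((x n - x (n+1)) / x (n+1)) * (x (n+1)) ^ (-α) ≤ b := by
      have hst : α * ((x n - x (n+1)) / x (n+1)) * (x (n+1)) ^ (-α)
          ≤ α * ((C₀ * (x n) ^ (1+α)) / x (n+1)) * (x (n+1)) ^ (-α) := by
        apply mul_le_mul_of_nonneg_right _ (hypos (n+1)).le
        apply mul_le_mul_of_nonneg_left _ hα.le
        exact (div_le_div_iff_of_pos_right (hpos (n+1))).mpr (hgap n).2
      have hne1 := (hpos (n+1)).ne'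
      have hne2 := (hxapos (n+1)).ne'
      have heq : α * ((C₀ * (x n) ^ (1+α)) / x (n+1)) * (x (n+1)) ^ (-α)
          = α * C₀ * (x n / x (n+1)) ^ (1+α) := by
        rw [Real.div_rpow (hpos n).le (hpos (n+1)).le, hxsplit (n+1),
          Real.rpow_neg (hpos (n+1)).le]
        field_simp
      rw [heq] at hst
      calc α * ((x n - x (n+1)) / x (n+1)) * (x (n+1)) ^ (-α)
          ≤ α * C₀ * (x n / x (n+1)) ^ (1+α) := hst
        _ ≤ α * C₀ * (2:ℝ) ^ (1+α) :=
            mul_le_mul_of_nonneg_left hrp (mul_pos hα hC₀pos).le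
        _ = b := rfl
    have hflip : α * ((x (n+1) - x n) / x (n+1)) * (x (n+1)) ^ (-α)
        = -(α * ((x n - x (n+1)) / x (n+1)) * (x (n+1)) ^ (-α)) := by ring
    rw [hflip] at hc
    linarith
  have hlinU : ∀ m : ℕ, (x (N + m)) ^ (-α) ≤ (x N) ^ (-α) + m * b := by
    intro m
    induction m with
    | zero => simp
    | succ k ih =>
      have h := hstepU (N + k) (Nat.le_add_right N k)
      have hnk : N + (k+1) = (N + k) + 1 := rfl
      rw [hnk]
      push_cast
      push_cast at ih
      linarith
  set M := (x N) ^ (-α) + b with hMdef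
  have hMpos : 0 < M := by rw [hMdef]; linarith [hbpos, hypos N]
  have hlowX : ∀ n, N ≤ n → M ^ (-(1/α)) * (n:ℝ) ^ (-(1/α)) ≤ x n := by
    intro n hn
    obtain ⟨m, rfl⟩ := Nat.exists_eq_add_of_le hn
    have hNr : (1:ℝ) ≤ (N:ℝ) := by exact_mod_cast hN1
    have hmr : (0:ℝ) ≤ (m:ℝ) := Nat.cast_nonneg m
    have h1 : (x (N + m)) ^ (-α) ≤ M * ((N:ℝ) + m) := by
      have h2 := hlinU m
      have hy0 := hypos N
      have hMeq : M = (x N) ^ (-α) + b := hMdef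
      nlinarith [hbpos]
    have hpos' : (0:ℝ) < (N:ℝ) + m := by linarith
    have h3 := Real.rpow_le_rpow_of_nonpos (hypos (N+m)) h1 hneg
    rw [hxid (N+m), Real.mul_rpow hMpos.le hpos'.le] at h3
    have hcast : ((N + m : ℕ):ℝ) = (N:ℝ) + m := by push_cast; ring
    rw [hcast]
    exact h3
  -- conclusion
  refine ⟨min (x N) (M ^ (-(1/α))), lt_min (hpos N) (rpow_pos_of_pos hMpos _),
    K ^ (-(1/α)), rpow_pos_of_pos hKpos _, ?_⟩
  intro n hn
  have hnr : (1:ℝ) ≤ (n:ℝ) := by exact_mod_cast hn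
  have hnp : (0:ℝ) < (n:ℝ) ^ (-(1/α)) := rpow_pos_of_pos (by linarith) _
  refine ⟨?_, hupper n hn⟩
  rcases le_or_gt N n with h | h
  · calc min (x N) (M ^ (-(1/α))) * (n:ℝ) ^ (-(1/α))
        ≤ M ^ (-(1/α)) * (n:ℝ) ^ (-(1/α)) :=
          mul_le_mul_of_nonneg_right (min_le_right _ _) hnp.le
      _ ≤ x n := hlowX n h
  · have hxn : x N ≤ x n := hdec.antitone h.le
    have hne1 : (n:ℝ) ^ (-(1/α)) ≤ 1 := Real.rpow_le_one_of_one_le_of_nonpos hnr hneg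
    calc min (x N) (M ^ (-(1/α))) * (n:ℝ) ^ (-(1/α))
        ≤ x N * (n:ℝ) ^ (-(1/α)) :=
          mul_le_mul_of_nonneg_right (min_le_left _ _) hnp.le
      _ ≤ x N * 1 := mul_le_mul_of_nonneg_left hne1 (hpos N).le
      _ = x N := mul_one _
      _ ≤ x n := hxn
end

section
/- Let h ∈ L¹[0,1] be a.e. equal to a decreasing anti-symmetric function (h(1-x) = -h(x)). Then ∫₀¹ (1/2 - x)·h(x) dx ≥ (1/16)·∫₀¹ |h(x)| dx. -/
open MeasureTheory

theorem stmt_16 (h : ℝ → ℝ)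
    (hint : IntegrableOn h (Set.Icc 0 1) volume)
    (hdec : AntitoneOn h (Set.Icc 0 1))
    (hanti : ∀ x ∈ Set.Icc (0:ℝ) 1, h (1 - x) = -h x) :
    (1/16) * ∫ x in Set.Icc (0:ℝ) 1, |h x| ≤
      ∫ x in Set.Icc (0:ℝ) 1, (1/2 - x) * h x := by
  have hgint : IntegrableOn (fun x => (1/2 - x) * h x) (Set.Icc 0 1) volume :=
    hint.continuousOn_mul (by fun_prop) isCompact_Icc
  have habsint : IntegrableOn (fun x => |h x|) (Set.Icc 0 1) volume := hint.abs
  have hsub : ∀ a b : ℝ, 0 ≤ a → a ≤ b → b ≤ 1 → IntervalIntegrable h volume a b :=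
    fun a b ha hab hb =>
      (hint.mono_set (by rw [Set.uIcc_of_le hab]; exact Set.Icc_subset_Icc ha hb)).intervalIntegrable
  have hgsub : ∀ a b : ℝ, 0 ≤ a → a ≤ b → b ≤ 1 →
      IntervalIntegrable (fun x => (1/2 - x) * h x) volume a b :=
    fun a b ha hab hb =>
      (hgint.mono_set (by rw [Set.uIcc_of_le hab]; exact Set.Icc_subset_Icc ha hb)).intervalIntegrable
  have habsub : ∀ a b : ℝ, 0 ≤ a → a ≤ b → b ≤ 1 →
      IntervalIntegrable (fun x => |h x|) volume a b :=
    fun a b ha hab hb =>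
      (habsint.mono_set (by rw [Set.uIcc_of_le hab]; exact Set.Icc_subset_Icc ha hb)).intervalIntegrable
  -- h(1/2) = 0
  have h0 : h (1/2) = 0 := by
    have := hanti (1/2) (by norm_num)
    norm_num at this
    linarith
  -- h ≥ 0 on [0,1/2]
  have hnn : ∀ x ∈ Set.Icc (0:ℝ) (1/2), 0 ≤ h x := by
    intro x hx
    have := hdec ⟨hx.1, by linarith [hx.2]⟩ (by norm_num : (1/2:ℝ) ∈ Set.Icc (0:ℝ) 1) hx.2
    linarith
  -- convert to interval integrals
  rw [show (Set.Icc (0:ℝ) 1) = Set.Icc 0 1 from rfl]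
  rw [MeasureTheory.integral_Icc_eq_integral_Ioc, MeasureTheory.integral_Icc_eq_integral_Ioc,
    ← intervalIntegral.integral_of_le (by norm_num : (0:ℝ) ≤ 1),
    ← intervalIntegral.integral_of_le (by norm_num : (0:ℝ) ≤ 1)]
  -- split at 1/2
  have hsplit_abs : ∫ x in (0:ℝ)..1, |h x| =
      (∫ x in (0:ℝ)..(1/2), |h x|) + ∫ x in (1/2:ℝ)..1, |h x| :=
    (intervalIntegral.integral_add_adjacent_intervals
      (habsub 0 (1/2) le_rfl (by norm_num) (by norm_num))
      (habsub (1/2) 1 (by norm_num) (by norm_num) le_rfl)).symm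
  have hsplit_g : ∫ x in (0:ℝ)..1, (1/2 - x) * h x =
      (∫ x in (0:ℝ)..(1/2), (1/2 - x) * h x) + ∫ x in (1/2:ℝ)..1, (1/2 - x) * h x :=
    (intervalIntegral.integral_add_adjacent_intervals
      (hgsub 0 (1/2) le_rfl (by norm_num) (by norm_num))
      (hgsub (1/2) 1 (by norm_num) (by norm_num) le_rfl)).symm
  have hsplit_half : ∫ x in (0:ℝ)..(1/2), (1/2 - x) * h x =
      (∫ x in (0:ℝ)..(1/4), (1/2 - x) * h x) + ∫ x in (1/4:ℝ)..(1/2), (1/2 - x) * h x :=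
    (intervalIntegral.integral_add_adjacent_intervals
      (hgsub 0 (1/4) le_rfl (by norm_num) (by norm_num))
      (hgsub (1/4) (1/2) (by norm_num) (by norm_num) (by norm_num))).symm
  have hsplit_C : ∫ x in (0:ℝ)..(1/2), h x =
      (∫ x in (0:ℝ)..(1/4), h x) + ∫ x in (1/4:ℝ)..(1/2), h x :=
    (intervalIntegral.integral_add_adjacent_intervals
      (hsub 0 (1/4) le_rfl (by norm_num) (by norm_num))
      (hsub (1/4) (1/2) (by norm_num) (by norm_num) (by norm_num))).symm
  -- symmetry of g-integral
  have hsymg : ∫ x in (1/2:ℝ)..1, (1/2 - x) * h x = ∫ x in (0:ℝ)..(1/2), (1/2 - x) * h x := by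
    have e : ∫ x in (0:ℝ)..(1/2), (1/2 - (1 - x)) * h (1 - x)
        = ∫ x in (1/2:ℝ)..1, (1/2 - x) * h x := by
      rw [intervalIntegral.integral_comp_sub_left (fun x => (1/2 - x) * h x) 1]
      norm_num
    rw [← e]
    apply intervalIntegral.integral_congr
    intro x hx
    rw [Set.uIcc_of_le (by norm_num : (0:ℝ) ≤ 1/2)] at hx
    show (1/2 - (1 - x)) * h (1 - x) = (1/2 - x) * h x
    rw [hanti x ⟨hx.1, by linarith [hx.2]⟩]
    ring
  -- symmetry of |h|-integral on right half equals ∫₀^{1/2} h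
  have hsyma : ∫ x in (1/2:ℝ)..1, |h x| = ∫ x in (0:ℝ)..(1/2), h x := by
    have e : ∫ x in (0:ℝ)..(1/2), |h (1 - x)| = ∫ x in (1/2:ℝ)..1, |h x| := by
      rw [intervalIntegral.integral_comp_sub_left (fun x => |h x|) 1]
      norm_num
    rw [← e]
    apply intervalIntegral.integral_congr
    intro x hx
    rw [Set.uIcc_of_le (by norm_num : (0:ℝ) ≤ 1/2)] at hx
    show |h (1 - x)| = h x
    rw [hanti x ⟨hx.1, by linarith [hx.2]⟩, abs_neg, abs_of_nonneg (hnn x hx)]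
  have habseq : ∫ x in (0:ℝ)..(1/2), |h x| = ∫ x in (0:ℝ)..(1/2), h x := by
    apply intervalIntegral.integral_congr
    intro x hx
    rw [Set.uIcc_of_le (by norm_num : (0:ℝ) ≤ 1/2)] at hx
    exact abs_of_nonneg (hnn x hx)
  -- B ≤ A
  have hBA : ∫ x in (1/4:ℝ)..(1/2), h x ≤ ∫ x in (0:ℝ)..(1/4), h x := by
    have e : ∫ x in (0:ℝ)..(1/4), h (x + 1/4) = ∫ x in (1/4:ℝ)..(1/2), h x := by
      rw [intervalIntegral.integral_comp_add_right h (1/4)]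
      norm_num
    rw [← e]
    apply intervalIntegral.integral_mono_on (by norm_num)
    · have := (hsub (1/4) (1/2) (by norm_num) (by norm_num) (by norm_num)).comp_add_right (1/4)
      norm_num at this ⊢
      exact this
    · exact hsub 0 (1/4) le_rfl (by norm_num) (by norm_num)
    · intro x hx
      exact hdec ⟨hx.1, by linarith [hx.2]⟩ ⟨by linarith [hx.1], by linarith [hx.2]⟩
        (by linarith)
  -- (1/4) A ≤ ∫₀^{1/4} g
  have h3 : (1/4) * (∫ x in (0:ℝ)..(1/4), h x) ≤ ∫ x in (0:ℝ)..(1/4), (1/2 - x) * h x := by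
    rw [← intervalIntegral.integral_const_mul]
    apply intervalIntegral.integral_mono_on (by norm_num)
      ((hsub 0 (1/4) le_rfl (by norm_num) (by norm_num)).const_mul _)
      (hgsub 0 (1/4) le_rfl (by norm_num) (by norm_num))
    intro x hx
    have hxn := hnn x ⟨hx.1, by linarith [hx.2]⟩
    nlinarith [hx.2]
  -- ∫_{1/4}^{1/2} g ≥ 0
  have h4 : 0 ≤ ∫ x in (1/4:ℝ)..(1/2), (1/2 - x) * h x := by
    apply intervalIntegral.integral_nonneg (by norm_num)
    intro u hu
    have := hnn u ⟨by linarith [hu.1], hu.2⟩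
    nlinarith [hu.2]
  -- A ≥ 0, B ≥ 0
  have hA0 : 0 ≤ ∫ x in (0:ℝ)..(1/4), h x := by
    apply intervalIntegral.integral_nonneg (by norm_num)
    intro u hu
    exact hnn u ⟨hu.1, by linarith [hu.2]⟩
  have hB0 : 0 ≤ ∫ x in (1/4:ℝ)..(1/2), h x := by
    apply intervalIntegral.integral_nonneg (by norm_num)
    intro u hu
    exact hnn u ⟨by linarith [hu.1], hu.2⟩
  rw [hsplit_abs, hsplit_g, hsymg, hsyma, habseq, hsplit_half, hsplit_C]
  linarith
end
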